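/- Let f : ℝ^m → ℝ be differentiable, ρ : ℝ^m → [0,∞) a probability density with μ ↦ ∇f(μ)∇f(μ)ᵀ ρ(μ) integrable, Σ = ∫ ∇f ∇fᵀ ρ dμ, and let w be a unit eigenvector of Σ with eigenvalue 0. Then the directional derivative ⟨∇f(μ), w⟩ vanishes for almost every μ with respect to the measure ρ(μ) dμ; i.e. directions in the kernel of Σ are directions along which f is almost everywhere flat. -/

import Mathlib

open MeasureTheory Matrix

/-- If `w` is a unit eigenvector of the uncentered covariance matrix
`Σ = ∫ ∇f ∇fᵀ ρ dμ` with eigenvalue `0`, then the directional derivative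
`⟨∇f(μ), w⟩` vanishes for `ρ(μ) dμ`-almost every `μ`. -/
theorem kernel_eigenvector_directional_derivative_ae_zero
    (m : ℕ) (f : EuclideanSpace ℝ (Fin m) → ℝ)
    (g : EuclideanSpace ℝ (Fin m) → EuclideanSpace ℝ (Fin m))
    (hf : ∀ μ, HasGradientAt f (g μ) μ)
    (ρ : EuclideanSpace ℝ (Fin m) → ℝ)
    (hρ_nonneg : ∀ μ, 0 ≤ ρ μ)
    (hρ_prob : ∫ μ, ρ μ = 1)
    (hint : ∀ i j : Fin m, Integrable (fun μ => g μ i * g μ j * ρ μ))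
    (S : Matrix (Fin m) (Fin m) ℝ)
    (hS : S = Matrix.of fun i j => ∫ μ, g μ i * g μ j * ρ μ)
    (w : EuclideanSpace ℝ (Fin m))
    (hw_unit : ‖w‖ = 1)
    (hw_ker : S.mulVec w = 0) :
    ∀ᵐ μ ∂(volume.withDensity fun μ => ENNReal.ofReal (ρ μ)),
      (inner ℝ (g μ) w : ℝ) = 0 := by
  classical
  -- g is measurable
  have hg_eq : g = fun μ => (InnerProductSpace.toDual ℝ _).symm (fderiv ℝ f μ) := by
    funext μ
    have h1 : gradient f μ = g μ := (hf μ).gradient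
    rw [← h1]; rfl
  have hg_meas : Measurable g := by
    rw [hg_eq]
    exact ((InnerProductSpace.toDual ℝ _).symm.continuous.measurable).comp
      (measurable_fderiv ℝ f)
  set F : EuclideanSpace ℝ (Fin m) → ℝ := fun μ => inner ℝ (g μ) w with hF
  have hF_eq : ∀ μ, F μ = ∑ i, g μ i * w i := by
    intro μ
    simp [hF, PiLp.inner_apply, RCLike.inner_apply, conj_trivial, mul_comm]
  have hF_meas : Measurable F := by
    apply Measurable.inner hg_meas measurable_const
  set h : EuclideanSpace ℝ (Fin m) → ℝ := fun μ => F μ ^ 2 * ρ μ with hh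
  have h_expand : ∀ μ, h μ = ∑ i, ∑ j, (w i * w j) * (g μ i * g μ j * ρ μ) := by
    intro μ
    simp only [hh, hF_eq, sq]
    rw [Finset.sum_mul_sum, Finset.sum_mul]
    refine Finset.sum_congr rfl fun i _ => ?_
    rw [Finset.sum_mul]
    exact Finset.sum_congr rfl fun j _ => by ring
  have h_int : Integrable h := by
    have : Integrable (fun μ => ∑ i, ∑ j, (w i * w j) * (g μ i * g μ j * ρ μ)) := by
      apply integrable_finset_sum
      intro i _
      apply integrable_finset_sum
      intro j _
      exact (hint i j).const_mul _
    exact this.congr (Filter.Eventually.of_forall fun μ => (h_expand μ).symm)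
  have h_integral : ∫ μ, h μ = 0 := by
    have e1 : ∫ μ, h μ = ∑ i, ∑ j, (w i * w j) * (S i j) := by
      rw [integral_congr_ae (Filter.Eventually.of_forall h_expand)]
      rw [integral_finset_sum _ fun i _ => integrable_finset_sum _
        fun j _ => (hint i j).const_mul _]
      refine Finset.sum_congr rfl fun i _ => ?_
      rw [integral_finset_sum _ fun j _ => (hint i j).const_mul _]
      refine Finset.sum_congr rfl fun j _ => ?_
      rw [integral_const_mul, hS]
      rfl
    rw [e1]
    have e2 : ∀ i : Fin m, ∑ j, (w i * w j) * S i j = w i * (S.mulVec w i) := by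
      intro i
      simp only [Matrix.mulVec, dotProduct, Finset.mul_sum]
      exact Finset.sum_congr rfl fun j _ => by ring
    simp [e2, hw_ker]
  have h_nonneg : ∀ μ, 0 ≤ h μ := fun μ => mul_nonneg (sq_nonneg _) (hρ_nonneg μ)
  have h_ae : h =ᵐ[volume] 0 :=
    (integral_eq_zero_iff_of_nonneg h_nonneg h_int).mp h_integral
  -- conclude
  rw [Filter.eventually_iff, mem_ae_iff]
  have hA_meas : MeasurableSet ({x | (inner ℝ (g x) w : ℝ) = 0}ᶜ) :=
    (hF_meas (measurableSet_singleton (0:ℝ))).compl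
  rw [withDensity_apply _ hA_meas]
  have hρ0 : ∀ᵐ μ ∂(volume.restrict ({x | (inner ℝ (g x) w : ℝ) = 0}ᶜ)),
      ENNReal.ofReal (ρ μ) = 0 := by
    filter_upwards [ae_restrict_of_ae h_ae, ae_restrict_mem hA_meas] with μ hμ hμA
    simp only [Set.mem_compl_iff, Set.mem_setOf_eq] at hμA
    have : F μ ^ 2 * ρ μ = 0 := hμ
    have hF2 : F μ ^ 2 ≠ 0 := pow_ne_zero _ hμA
    have : ρ μ = 0 := by
      rcases mul_eq_zero.mp this with h' | h'
      · exact absurd h' hF2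
      · exact h'
    simp [this]
  rw [lintegral_congr_ae hρ0, lintegral_zero]
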